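/- arXiv:1605.05744 — 2 statements merged into one kernel-verified Lean document; each statement's English description precedes it below -/
import Mathlib

section
/- Let n ≥ 2 and u ∈ ℂ. If λ is a partition of n having at least one even part (i.e., λ ∉ 𝒪𝒫_n) and w ∈ S_n has cycle type λ, then w ∈ [ℌ_A, ℌ_A]. -/
open scoped BigOperators

namespace DAHCA

/-- Generators of the degenerate affine Hecke-Clifford algebra of type `A_{n-1}`. -/
inductive Gen (n : ℕ) : Type
  | x : Fin n → Gen n
  | c : Fin n → Gen n
  | w : Equiv.Perm (Fin n) → Gen n

noncomputable def X (n : ℕ) (i : Fin n) : FreeAlgebra ℂ (Gen n) := FreeAlgebra.ι ℂ (Gen.x i)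
noncomputable def C (n : ℕ) (i : Fin n) : FreeAlgebra ℂ (Gen n) := FreeAlgebra.ι ℂ (Gen.c i)
noncomputable def W (n : ℕ) (σ : Equiv.Perm (Fin n)) : FreeAlgebra ℂ (Gen n) :=
  FreeAlgebra.ι ℂ (Gen.w σ)

/-- The simple transposition `s_{i+1} = (i, i+1)` (0-indexed). -/
def sA (n : ℕ) (i : ℕ) (h : i + 1 < n) : Equiv.Perm (Fin n) :=
  Equiv.swap ⟨i, Nat.lt_of_succ_lt h⟩ ⟨i + 1, h⟩

/-- The defining relations of the degenerate affine Hecke-Clifford algebra of type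
`A_{n-1}` with parameter `u`. -/
inductive Rel (n : ℕ) (u : ℂ) : FreeAlgebra ℂ (Gen n) → FreeAlgebra ℂ (Gen n) → Prop
  | xx (i j : Fin n) : Rel n u (X n i * X n j) (X n j * X n i)
  | csq (i : Fin n) : Rel n u (C n i * C n i) 1
  | cc (i j : Fin n) (hij : i ≠ j) : Rel n u (C n i * C n j) (-(C n j * C n i))
  | ww (σ τ : Equiv.Perm (Fin n)) : Rel n u (W n σ * W n τ) (W n (σ * τ))
  | wone : Rel n u (W n 1) 1
  | xc (i : Fin n) : Rel n u (X n i * C n i) (-(C n i * X n i))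
  | xc' (i j : Fin n) (hij : i ≠ j) : Rel n u (X n i * C n j) (C n j * X n i)
  | wc (σ : Equiv.Perm (Fin n)) (i : Fin n) : Rel n u (W n σ * C n i) (C n (σ i) * W n σ)
  | cross (i : ℕ) (h : i + 1 < n) :
      Rel n u (X n ⟨i + 1, h⟩ * W n (sA n i h) - W n (sA n i h) * X n ⟨i, Nat.lt_of_succ_lt h⟩)
        (u • (1 - C n ⟨i + 1, h⟩ * C n ⟨i, Nat.lt_of_succ_lt h⟩))
  | xw (i : ℕ) (h : i + 1 < n) (j : Fin n) (h1 : (j : ℕ) ≠ i) (h2 : (j : ℕ) ≠ i + 1) :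
      Rel n u (X n j * W n (sA n i h)) (W n (sA n i h) * X n j)

/-- The degenerate affine Hecke-Clifford algebra of type `A_{n-1}` with parameter `u`. -/
abbrev HA (n : ℕ) (u : ℂ) := RingQuot (Rel n u)

noncomputable def xH (n : ℕ) (u : ℂ) (i : Fin n) : HA n u :=
  RingQuot.mkAlgHom ℂ (Rel n u) (X n i)
noncomputable def cH (n : ℕ) (u : ℂ) (i : Fin n) : HA n u :=
  RingQuot.mkAlgHom ℂ (Rel n u) (C n i)
noncomputable def wH (n : ℕ) (u : ℂ) (σ : Equiv.Perm (Fin n)) : HA n u :=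
  RingQuot.mkAlgHom ℂ (Rel n u) (W n σ)

/-- The linear span of all commutators in an algebra `A`; the cocenter is `A` modulo
this subspace. -/
def commSpan (A : Type*) [Ring A] [Algebra ℂ A] : Submodule ℂ A :=
  Submodule.span ℂ {z : A | ∃ a b : A, z = a * b - b * a}

/-- The ordered product `c_{i_1} c_{i_2} ⋯ c_{i_m}` over `I = {i_1 < i_2 < ⋯ < i_m}`. -/
noncomputable def cProd (n : ℕ) (u : ℂ) (I : Finset (Fin n)) : HA n u :=
  ((I.sort (· ≤ ·)).map (cH n u)).prod

/-- The cycle `(a, a+1, …, b-1)` expressed as the product of the simple transpositions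
`s_{a+1} s_{a+2} ⋯ s_{b-1}` (1-indexed), i.e. `(a,a+1)(a+1,a+2)⋯(b-2,b-1)` (0-indexed). -/
def wSeg (n : ℕ) (a b : ℕ) : Equiv.Perm (Fin n) :=
  ((List.range (b - a - 1)).map fun j =>
    if h : a + j + 1 < n then sA n (a + j) h else 1).prod

end DAHCA
namespace DAHCA

/-- `w` has cycle type `λ`: the nontrivial parts of `λ` are exactly the cycle lengths of
`w` (the parts equal to `1` correspond to the fixed points of `w`). -/
def HasCycleType (n : ℕ) (w : Equiv.Perm (Fin n)) (lam : Nat.Partition n) : Prop :=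
  Multiset.filter (fun p => p ≠ 1) lam.parts = Equiv.Perm.cycleType w

section Aux
variable (n : ℕ) (u : ℂ)

lemma cH_sq (i : Fin n) : cH n u i * cH n u i = 1 := by
  have := RingQuot.mkAlgHom_rel ℂ (Rel.csq (u := u) i)
  simpa [cH, map_mul, map_one] using this

lemma wH_cH (σ : Equiv.Perm (Fin n)) (i : Fin n) :
    wH n u σ * cH n u i = cH n u (σ i) * wH n u σ := by
  have := RingQuot.mkAlgHom_rel ℂ (Rel.wc (u := u) σ i)
  simpa [wH, cH, map_mul] using this

lemma cH_anticomm {i j : Fin n} (hij : i ≠ j) :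
    cH n u i * cH n u j = -(cH n u j * cH n u i) := by
  have := RingQuot.mkAlgHom_rel ℂ (Rel.cc (u := u) i j hij)
  simpa [cH, map_mul, map_neg] using this

/-- Conjugation of a product of `c`'s by a group element. -/
lemma wH_mul_cprod (σ : Equiv.Perm (Fin n)) (L : List (Fin n)) :
    wH n u σ * (L.map (cH n u)).prod = ((L.map σ).map (cH n u)).prod * wH n u σ := by
  induction L with
  | nil => simp
  | cons a T ih =>
    simp only [List.map_cons, List.prod_cons]
    rw [← mul_assoc, wH_cH, mul_assoc, ih, ← mul_assoc]

/-- Moving a `c` across a product of distinct `c`'s. -/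
lemma cprod_mul_cH {a : Fin n} {M : List (Fin n)} (h : ∀ b ∈ M, b ≠ a) :
    (M.map (cH n u)).prod * cH n u a
      = ((-1 : ℂ) ^ M.length) • (cH n u a * (M.map (cH n u)).prod) := by
  induction M with
  | nil => simp
  | cons b T ih =>
    have hb : b ≠ a := h b List.mem_cons_self
    have key : ∀ z : HA n u, cH n u b * (cH n u a * z)
        = (-1 : ℂ) • (cH n u a * (cH n u b * z)) := by
      intro z
      have h1 : cH n u b * cH n u a = (-1 : ℂ) • (cH n u a * cH n u b) := by
        rw [cH_anticomm n u hb]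
        exact (neg_one_smul ℂ (cH n u a * cH n u b)).symm
      rw [← mul_assoc, h1, smul_mul_assoc, mul_assoc]
    simp only [List.map_cons, List.prod_cons, List.length_cons]
    rw [mul_assoc, ih (fun x hx => h x (List.mem_cons_of_mem b hx)), mul_smul_comm,
      key, smul_smul, ← pow_succ]

lemma cprod_inv (L : List (Fin n)) :
    (L.map (cH n u)).prod * (L.reverse.map (cH n u)).prod = 1 ∧
      (L.reverse.map (cH n u)).prod * (L.map (cH n u)).prod = 1 := by
  induction L with
  | nil => simp
  | cons a T ih =>
    simp only [List.map_cons, List.prod_cons, List.reverse_cons, List.map_append,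
      List.prod_append, List.map_cons, List.map_nil, List.prod_cons, List.prod_nil, mul_one]
    constructor
    · rw [mul_assoc (cH n u a), ← mul_assoc (List.map (cH n u) T).prod, ih.1, one_mul, cH_sq]
    · rw [mul_assoc, ← mul_assoc (cH n u a), cH_sq, one_mul, ih.2]

end Aux

/-- If `λ` is a partition of `n` having at least one even part and
`w ∈ S_n` has cycle type `λ`, then `w` lies in the span of commutators of `ℌ_A`. -/
theorem perm_not_odd_partition_mem_commutator (n : ℕ) (hn : 2 ≤ n) (u : ℂ)
    (lam : Nat.Partition n) (hlam : ∃ p ∈ lam.parts, Even p)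
    (w : Equiv.Perm (Fin n)) (hw : HasCycleType n w lam) :
    wH n u w ∈ commSpan (HA n u) := by
  classical
  obtain ⟨p, hp, hpe⟩ := hlam
  have hp1 : p ≠ 1 := by rintro rfl; exact Nat.not_even_one hpe
  have hpc : p ∈ w.cycleType := by
    rw [← hw]; exact Multiset.mem_filter.2 ⟨hp, hp1⟩
  have hp2 : 2 ≤ p := Equiv.Perm.two_le_of_mem_cycleType hpc
  rw [Equiv.Perm.cycleType_def] at hpc
  obtain ⟨σ, hσmem, hσcard⟩ := Multiset.mem_map.1 hpc
  have hσmem' : σ ∈ w.cycleFactorsFinset := hσmem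
  obtain ⟨hcyc, hagree⟩ := Equiv.Perm.mem_cycleFactorsFinset_iff.1 hσmem'
  have hord : orderOf σ = p := by
    rw [hcyc.orderOf]; exact hσcard
  obtain ⟨a, ha⟩ := Finset.card_pos.1 (by rw [show σ.support.card = p from hσcard]; omega)
  set f : ℕ → Fin n := fun k => (σ ^ k) a with hf
  have hfs : ∀ k, f k ∈ σ.support := fun k => Equiv.Perm.pow_apply_mem_support.2 ha
  have hwf : ∀ k, w (f k) = f (k + 1) := by
    intro k
    have h1 : σ (f k) = w (f k) := hagree _ (hfs k)
    rw [← h1, hf]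
    simp only [pow_succ', Equiv.Perm.mul_apply]
  have hfp : f p = a := by
    rw [hf]
    simp only [← hord, pow_orderOf_eq_one, Equiv.Perm.one_apply]
  have hdist : ∀ k, 0 < k → k < p → f k ≠ a := by
    intro k hk0 hkp hfa
    have hax : σ a ≠ a := Equiv.Perm.mem_support.1 ha
    have : σ ^ k = 1 := (hcyc.pow_eq_one_iff' hax).2 hfa
    have := orderOf_dvd_of_pow_eq_one this
    rw [hord] at this
    exact absurd (Nat.le_of_dvd hk0 this) (by omega)
  obtain ⟨q, hpq⟩ : ∃ q, p = q + 1 := ⟨p - 1, by omega⟩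
  have hqodd : Odd q := by
    rcases hpe with ⟨m, hm⟩
    exact ⟨m - 1, by omega⟩
  set M : List (Fin n) := (List.range q).map (fun k => f (k + 1)) with hM
  set L : List (Fin n) := a :: M with hL
  have hLrange : L = (List.range p).map f := by
    rw [hpq, List.range_succ_eq_map, List.map_cons, List.map_map, hL, hM]
    congr 1
    all_goals simp [hf]
  have hLw : L.map w = M ++ [a] := by
    rw [hLrange, List.map_map]
    have h2 : (List.range p).map (w ∘ f) = (List.range p).map (fun k => f (k + 1)) :=
      List.map_congr_left (fun k _ => hwf k)
    rw [h2, hpq, List.range_succ, List.map_append]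
    congr 1
    all_goals simp [← hpq, hfp]
  set P : HA n u := (L.map (cH n u)).prod with hP
  set Pm : HA n u := (M.map (cH n u)).prod with hPm
  set Q : HA n u := (L.reverse.map (cH n u)).prod with hQ
  have hPdef : P = cH n u a * Pm := by rw [hP, hL]; simp [hPm]
  have hMa : ∀ b ∈ M, b ≠ a := by
    intro b hb
    rw [hM] at hb
    simp only [List.mem_map, List.mem_range] at hb
    obtain ⟨k, hk, rfl⟩ := hb
    exact hdist (k + 1) (by omega) (by omega)
  have hanti : Pm * cH n u a = -(cH n u a * Pm) := by
    have := cprod_mul_cH n u hMa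
    rw [← hPm] at this
    rw [this, hM]
    simp only [List.length_map, List.length_range]
    rw [hqodd.neg_one_pow]
    exact neg_one_smul ℂ (cH n u a * Pm)
  have hAP : wH n u w * P = -(P * wH n u w) := by
    have h0 := wH_mul_cprod n u w L
    rw [hLw] at h0
    simp only [List.map_append, List.prod_append, List.map_cons, List.map_nil,
      List.prod_cons, List.prod_nil, mul_one] at h0
    rw [← hPm, ← hP] at h0
    rw [h0, hanti, hPdef]
    noncomm_ring
    simp only [smul_mul_assoc, mul_smul_comm, mul_assoc]
  have h1 : Q * P = 1 := (cprod_inv n u L).2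
  have h2 : P * Q = 1 := (cprod_inv n u L).1
  have hz : Q * (wH n u w * P) - (wH n u w * P) * Q ∈ commSpan (HA n u) :=
    Submodule.subset_span ⟨Q, wH n u w * P, rfl⟩
  have e1 : Q * (wH n u w * P) = -(wH n u w) := by
    rw [hAP, show Q * -(P * wH n u w) = -(Q * P * wH n u w) by
      noncomm_ring
      simp only [smul_mul_assoc, mul_smul_comm, mul_assoc], h1, one_mul]
  have e2 : (wH n u w * P) * Q = wH n u w := by
    rw [mul_assoc, h2, mul_one]
  have hcalc : Q * (wH n u w * P) - (wH n u w * P) * Q = (-2 : ℂ) • wH n u w := by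
    rw [e1, e2]
    module
  have hmem := Submodule.smul_mem (commSpan (HA n u)) ((-2 : ℂ)⁻¹) hz
  rw [hcalc, smul_smul, inv_mul_cancel₀ (by norm_num), one_smul] at hmem
  exact hmem


end DAHCA
end

section
/- Let n ≥ 2 and u, v ∈ ℂ. Let (λ,μ) be a bipartition of n such that λ has an even part or μ has an odd part (i.e., it is not the case that all parts of λ are odd and all parts of μ are even). Then every w ∈ W_{B_n} whose cycle type is (λ,μ) satisfies w ∈ [ℌ_B, ℌ_B]. -/
open scoped BigOperators

namespace DAHCBD

/-- The set `{±1, …, ±n}` on which signed permutations act: `(i, true)` is `i` and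
`(i, false)` is `−i`. -/
abbrev P (n : ℕ) := Fin n × Bool

/-- The sign-flip involution `i ↦ −i`. -/
def negP (n : ℕ) : Equiv.Perm (P n) :=
  ⟨fun p => (p.1, !p.2), fun p => (p.1, !p.2), fun p => by simp, fun p => by simp⟩

lemma negP_apply (n : ℕ) (p : P n) : negP n p = (p.1, !p.2) := rfl

/-- A permutation of `{±1, …, ±n}` is a signed permutation when it commutes with the
sign-flip, i.e. `π(−i) = −π(i)`. -/
def IsSigned (n : ℕ) (π : Equiv.Perm (P n)) : Prop :=
  ∀ p : P n, π (negP n p) = negP n (π p)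

/-- The signed simple reflection `s_i = (i, i+1)(−i, −(i+1))` (0-indexed `i`). -/
def sgnSwap (n : ℕ) (i : ℕ) (h : i + 1 < n) : Equiv.Perm (P n) :=
  Equiv.swap (⟨i, Nat.lt_of_succ_lt h⟩, true) (⟨i + 1, h⟩, true) *
    Equiv.swap (⟨i, Nat.lt_of_succ_lt h⟩, false) (⟨i + 1, h⟩, false)

/-- The type-`B` simple reflection `s_n = (n, −n)`. -/
def sBn (n : ℕ) (h : 0 < n) : Equiv.Perm (P n) :=
  Equiv.swap (⟨n - 1, Nat.sub_lt h Nat.one_pos⟩, true) (⟨n - 1, Nat.sub_lt h Nat.one_pos⟩, false)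

/-- The type-`D` simple reflection `s_n = (n−1, −n)(n, −(n−1))`. -/
def sDn (n : ℕ) (h : 2 ≤ n) : Equiv.Perm (P n) :=
  Equiv.swap (⟨n - 2, by omega⟩, true) (⟨n - 1, by omega⟩, false) *
    Equiv.swap (⟨n - 1, by omega⟩, true) (⟨n - 2, by omega⟩, false)

/-- The simple reflections of type `A_{n-1}` inside the signed permutations. -/
def simplesTypeA (n : ℕ) : Set (Equiv.Perm (P n)) :=
  {σ | ∃ (i : ℕ) (h : i + 1 < n), σ = sgnSwap n i h}

/-- The simple reflections of `W_{B_n}`. -/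
def simplesB (n : ℕ) : Set (Equiv.Perm (P n)) :=
  simplesTypeA n ∪ {σ | ∃ h : 0 < n, σ = sBn n h}

/-- The simple reflections of `W_{D_n}`. -/
def simplesD (n : ℕ) : Set (Equiv.Perm (P n)) :=
  simplesTypeA n ∪ {σ | ∃ h : 2 ≤ n, σ = sDn n h}

/-- The Weyl group of type `B_n`, generated by its simple reflections. -/
def WB (n : ℕ) : Subgroup (Equiv.Perm (P n)) := Subgroup.closure (simplesB n)

/-- The Weyl group of type `D_n`, generated by its simple reflections. -/
def WD (n : ℕ) : Subgroup (Equiv.Perm (P n)) := Subgroup.closure (simplesD n)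

lemma sgnSwap_mem_WB (n : ℕ) (i : ℕ) (h : i + 1 < n) : sgnSwap n i h ∈ WB n :=
  Subgroup.subset_closure (Or.inl ⟨i, h, rfl⟩)

lemma sBn_mem_WB (n : ℕ) (h : 0 < n) : sBn n h ∈ WB n :=
  Subgroup.subset_closure (Or.inr ⟨h, rfl⟩)

lemma sgnSwap_mem_WD (n : ℕ) (i : ℕ) (h : i + 1 < n) : sgnSwap n i h ∈ WD n :=
  Subgroup.subset_closure (Or.inl ⟨i, h, rfl⟩)

lemma sDn_mem_WD (n : ℕ) (h : 2 ≤ n) : sDn n h ∈ WD n :=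
  Subgroup.subset_closure (Or.inr ⟨h, rfl⟩)

/-- The simple reflection `s_{i+1}` as an element of `W_{B_n}` (`1` if out of range). -/
def sB' (n : ℕ) (i : ℕ) : ↥(WB n) :=
  if h : i + 1 < n then ⟨sgnSwap n i h, sgnSwap_mem_WB n i h⟩ else 1

/-- The last simple reflection `s_n` as an element of `W_{B_n}` (`1` if `n = 0`). -/
def sBlast' (n : ℕ) : ↥(WB n) :=
  if h : 0 < n then ⟨sBn n h, sBn_mem_WB n h⟩ else 1

/-- The simple reflection `s_{i+1}` as an element of `W_{D_n}` (`1` if out of range). -/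
def sD' (n : ℕ) (i : ℕ) : ↥(WD n) :=
  if h : i + 1 < n then ⟨sgnSwap n i h, sgnSwap_mem_WD n i h⟩ else 1

/-- The last simple reflection `s_n` as an element of `W_{D_n}` (`1` if `n < 2`). -/
def sDlast' (n : ℕ) : ↥(WD n) :=
  if h : 2 ≤ n then ⟨sDn n h, sDn_mem_WD n h⟩ else 1

open Fin.NatCast in
/-- The cycle `(a, a+1, …, a+m-1)` on `Fin n`. -/
def blockCycleF (n a m : ℕ) : Equiv.Perm (Fin n) :=
  if h : 0 < n then
    haveI : NeZero n := ⟨h.ne'⟩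
    (Equiv.addLeft (a : Fin n)) * (Fin.cycleRange ((m - 1 : ℕ) : Fin n)) *
      (Equiv.addLeft (a : Fin n))⁻¹
  else 1

/-- The positive `m`-cycle `(a, a+1, …, a+m-1)` as a signed permutation. -/
def posCycle (n a m : ℕ) : Equiv.Perm (P n) :=
  Equiv.prodCongr (blockCycleF n a m) (Equiv.refl Bool)

open Fin.NatCast in
/-- The sign flip at position `j`. -/
def flipAt (n : ℕ) (j : ℕ) : Equiv.Perm (P n) :=
  if h : 0 < n then
    haveI : NeZero n := ⟨h.ne'⟩
    Equiv.swap ((j : Fin n), true) ((j : Fin n), false)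
  else 1

/-- The negative `m`-cycle `(a → a+1 → ⋯ → a+m-1 → −a)` as a signed permutation. -/
def negCycle (n a m : ℕ) : Equiv.Perm (P n) :=
  posCycle n a m * flipAt n (a + m - 1)

/-- Sort a multiset of naturals in decreasing order. -/
def sortDescM (m : Multiset ℕ) : List ℕ := (m.sort (· ≤ ·)).reverse

/-- The standard representative of the conjugacy class of cycle type `(λ, μ)`:
positive cycles on consecutive blocks of sizes `λ_1 ≥ λ_2 ≥ ⋯`, followed by negative
cycles on consecutive blocks of sizes `μ_1 ≥ μ_2 ≥ ⋯`. -/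
def stdRep (n : ℕ) (ll lm : List ℕ) : Equiv.Perm (P n) :=
  ((List.range ll.length).map fun k => posCycle n ((ll.take k).sum) (ll.getD k 0)).prod *
    ((List.range lm.length).map fun k =>
      negCycle n (ll.sum + (lm.take k).sum) (lm.getD k 0)).prod

/-- A signed permutation `w` has cycle type `(λ, μ)` iff it is conjugate, by a signed
permutation, to the standard representative of type `(λ, μ)`:  `λ` lists the lengths of
the positive cycles of `w` and `μ` the lengths of the negative cycles. -/
def CycType (n : ℕ) (w : Equiv.Perm (P n)) (lam mu : Multiset ℕ) : Prop :=
  ∃ τ : Equiv.Perm (P n), IsSigned n τ ∧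
    w = τ * stdRep n (sortDescM lam) (sortDescM mu) * τ⁻¹

/-- A bipartition of `n`: a pair of partitions `(λ, μ)` with `|λ| + |μ| = n`. -/
structure Bip (n : ℕ) where
  l : Multiset ℕ
  m : Multiset ℕ
  posl : ∀ a ∈ l, 0 < a
  posm : ∀ a ∈ m, 0 < a
  hsum : l.sum + m.sum = n

lemma isSigned_inv {n : ℕ} {π : Equiv.Perm (P n)} (hπ : IsSigned n π) : IsSigned n π⁻¹ := by
  intro p
  have h1 := hπ (π⁻¹ p)
  have h2 : π (negP n (π⁻¹ p)) = negP n p := by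
    rw [h1]
    simp
  calc π⁻¹ (negP n p) = π⁻¹ (π (negP n (π⁻¹ p))) := by rw [h2]
    _ = negP n (π⁻¹ p) := Equiv.Perm.inv_eq_iff_eq.mpr rfl

lemma uPerm_aux {n : ℕ} (π : Equiv.Perm (P n)) (hπ : IsSigned n π) (i : Fin n) :
    (π⁻¹ ((π (i, true)).1, true)).1 = i := by
  by_cases hs : (π (i, true)).2 = true
  · have h1 : ((π (i, true)).1, true) = π (i, true) := Prod.ext rfl hs.symm
    rw [h1]
    simp
  · have hs' : (π (i, true)).2 = false := by simpa using hs
    have h1 : ((π (i, true)).1, true) = negP n (π (i, true)) := by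
      rw [negP_apply, hs']
      rfl
    have h2 : π⁻¹ (negP n (π (i, true))) = negP n (i, true) := by
      rw [← hπ (i, true)]
      exact Equiv.Perm.inv_eq_iff_eq.mpr rfl
    rw [h1, h2]
    rfl

/-- The underlying (unsigned) permutation of a signed permutation. -/
noncomputable def uPerm (n : ℕ) (π : Equiv.Perm (P n)) : Equiv.Perm (Fin n) :=
  haveI := Classical.dec (IsSigned n π)
  if hπ : IsSigned n π then
    { toFun := fun i => (π (i, true)).1
      invFun := fun i => (π⁻¹ (i, true)).1
      left_inv := fun i => uPerm_aux π hπ i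
      right_inv := fun i => by
        have := uPerm_aux π⁻¹ (isSigned_inv hπ) i
        simpa using this }
  else 1

end DAHCBD
namespace DAHCBD

/-- Generators of the degenerate affine Hecke-Clifford algebra of type `B_n`. -/
inductive GenB (n : ℕ) : Type
  | x : Fin n → GenB n
  | c : Fin n → GenB n
  | w : ↥(WB n) → GenB n

noncomputable def XB (n : ℕ) (i : Fin n) : FreeAlgebra ℂ (GenB n) := FreeAlgebra.ι ℂ (GenB.x i)
noncomputable def CB (n : ℕ) (i : Fin n) : FreeAlgebra ℂ (GenB n) := FreeAlgebra.ι ℂ (GenB.c i)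
noncomputable def WBg (n : ℕ) (σ : ↥(WB n)) : FreeAlgebra ℂ (GenB n) :=
  FreeAlgebra.ι ℂ (GenB.w σ)

/-- The defining relations of the degenerate affine Hecke-Clifford algebra of type `B_n`
with parameters `u, v`. -/
inductive RelB (n : ℕ) (u v : ℂ) : FreeAlgebra ℂ (GenB n) → FreeAlgebra ℂ (GenB n) → Prop
  | xx (i j : Fin n) : RelB n u v (XB n i * XB n j) (XB n j * XB n i)
  | csq (i : Fin n) : RelB n u v (CB n i * CB n i) 1
  | cc (i j : Fin n) (hij : i ≠ j) : RelB n u v (CB n i * CB n j) (-(CB n j * CB n i))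
  | ww (σ τ : ↥(WB n)) : RelB n u v (WBg n σ * WBg n τ) (WBg n (σ * τ))
  | wone : RelB n u v (WBg n 1) 1
  | xc (i : Fin n) : RelB n u v (XB n i * CB n i) (-(CB n i * XB n i))
  | xc' (i j : Fin n) (hij : i ≠ j) : RelB n u v (XB n i * CB n j) (CB n j * XB n i)
  | sc1 (i : ℕ) (h : i + 1 < n) :
      RelB n u v (WBg n ⟨sgnSwap n i h, sgnSwap_mem_WB n i h⟩ * CB n ⟨i, Nat.lt_of_succ_lt h⟩)
        (CB n ⟨i + 1, h⟩ * WBg n ⟨sgnSwap n i h, sgnSwap_mem_WB n i h⟩)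
  | sc2 (i : ℕ) (h : i + 1 < n) :
      RelB n u v (WBg n ⟨sgnSwap n i h, sgnSwap_mem_WB n i h⟩ * CB n ⟨i + 1, h⟩)
        (CB n ⟨i, Nat.lt_of_succ_lt h⟩ * WBg n ⟨sgnSwap n i h, sgnSwap_mem_WB n i h⟩)
  | sc3 (i : ℕ) (h : i + 1 < n) (j : Fin n) (h1 : (j : ℕ) ≠ i) (h2 : (j : ℕ) ≠ i + 1) :
      RelB n u v (WBg n ⟨sgnSwap n i h, sgnSwap_mem_WB n i h⟩ * CB n j)
        (CB n j * WBg n ⟨sgnSwap n i h, sgnSwap_mem_WB n i h⟩)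
  | cross (i : ℕ) (h : i + 1 < n) :
      RelB n u v (XB n ⟨i + 1, h⟩ * WBg n ⟨sgnSwap n i h, sgnSwap_mem_WB n i h⟩ -
          WBg n ⟨sgnSwap n i h, sgnSwap_mem_WB n i h⟩ * XB n ⟨i, Nat.lt_of_succ_lt h⟩)
        (u • (1 - CB n ⟨i + 1, h⟩ * CB n ⟨i, Nat.lt_of_succ_lt h⟩))
  | xw (i : ℕ) (h : i + 1 < n) (j : Fin n) (h1 : (j : ℕ) ≠ i) (h2 : (j : ℕ) ≠ i + 1) :
      RelB n u v (XB n j * WBg n ⟨sgnSwap n i h, sgnSwap_mem_WB n i h⟩)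
        (WBg n ⟨sgnSwap n i h, sgnSwap_mem_WB n i h⟩ * XB n j)
  | snc (h : 0 < n) :
      RelB n u v (WBg n ⟨sBn n h, sBn_mem_WB n h⟩ * CB n ⟨n - 1, Nat.sub_lt h Nat.one_pos⟩)
        (-(CB n ⟨n - 1, Nat.sub_lt h Nat.one_pos⟩ * WBg n ⟨sBn n h, sBn_mem_WB n h⟩))
  | snc' (h : 0 < n) (i : Fin n) (hi : (i : ℕ) ≠ n - 1) :
      RelB n u v (WBg n ⟨sBn n h, sBn_mem_WB n h⟩ * CB n i)
        (CB n i * WBg n ⟨sBn n h, sBn_mem_WB n h⟩)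
  | snx (h : 0 < n) :
      RelB n u v (WBg n ⟨sBn n h, sBn_mem_WB n h⟩ * XB n ⟨n - 1, Nat.sub_lt h Nat.one_pos⟩ +
          XB n ⟨n - 1, Nat.sub_lt h Nat.one_pos⟩ * WBg n ⟨sBn n h, sBn_mem_WB n h⟩)
        ((-((Real.sqrt 2 : ℂ) * v)) • 1)
  | snx' (h : 0 < n) (i : Fin n) (hi : (i : ℕ) ≠ n - 1) :
      RelB n u v (WBg n ⟨sBn n h, sBn_mem_WB n h⟩ * XB n i)
        (XB n i * WBg n ⟨sBn n h, sBn_mem_WB n h⟩)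

/-- The degenerate affine Hecke-Clifford algebra of type `B_n`. -/
abbrev HB (n : ℕ) (u v : ℂ) := RingQuot (RelB n u v)

noncomputable def xB (n : ℕ) (u v : ℂ) (i : Fin n) : HB n u v :=
  RingQuot.mkAlgHom ℂ (RelB n u v) (XB n i)
noncomputable def cB (n : ℕ) (u v : ℂ) (i : Fin n) : HB n u v :=
  RingQuot.mkAlgHom ℂ (RelB n u v) (CB n i)
noncomputable def wB (n : ℕ) (u v : ℂ) (σ : ↥(WB n)) : HB n u v :=
  RingQuot.mkAlgHom ℂ (RelB n u v) (WBg n σ)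

/-- The linear span of all commutators in an algebra `A`. -/
def commSpan (A : Type*) [Ring A] [Algebra ℂ A] : Submodule ℂ A :=
  Submodule.span ℂ {z : A | ∃ a b : A, z = a * b - b * a}

/-- The ordered product `c_{i_1} c_{i_2} ⋯ c_{i_m}` over `I = {i_1 < i_2 < ⋯ < i_m}`. -/
noncomputable def cProdB (n : ℕ) (u v : ℂ) (I : Finset (Fin n)) : HB n u v :=
  ((I.sort (· ≤ ·)).map (cB n u v)).prod

/-- The product `s_{a+1} s_{a+2} ⋯ s_{b-1}` of type-`A` simple reflections in `W_{B_n}`. -/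
def wSegB (n : ℕ) (a b : ℕ) : ↥(WB n) :=
  ((List.range (b - a - 1)).map fun j => sB' n (a + j)).prod

/-- The signed permutation `w_{(n)} = s_1 s_2 ⋯ s_{n-1} s_n ∈ W_{B_n}`. -/
def wCircB (n : ℕ) : ↥(WB n) := wSegB n 0 n * sBlast' n

end DAHCBD
namespace DAHCBD


noncomputable section AuxProof

open Fin.NatCast

/-! ### Sign bookkeeping for signed permutations -/

/-- `±1` as a complex number attached to a boolean sign. -/
def Zb : Bool → ℂ := fun b => if b then 1 else -1

lemma Zb_sq (b : Bool) : Zb b * Zb b = 1 := by cases b <;> simp [Zb]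
lemma Zb_ne_zero (b : Bool) : Zb b ≠ 0 := by cases b <;> simp [Zb]
lemma Zb_not (b : Bool) : Zb (!b) = - Zb b := by cases b <;> simp [Zb]
lemma Zb_beq (a b : Bool) : Zb (a == b) = Zb a * Zb b := by
  cases a <;> cases b <;> simp [Zb]

/-- The underlying map on indices of a (signed) permutation. -/
def uf {n : ℕ} (π : Equiv.Perm (P n)) (i : Fin n) : Fin n := (π (i, true)).1

/-- The sign of a (signed) permutation at an index. -/
def epsz {n : ℕ} (π : Equiv.Perm (P n)) (i : Fin n) : ℂ := Zb (π (i, true)).2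

lemma epsz_sq {n : ℕ} (π : Equiv.Perm (P n)) (i : Fin n) : epsz π i * epsz π i = 1 :=
  Zb_sq _

lemma isSigned_one (n : ℕ) : IsSigned n 1 := fun _ => rfl

lemma isSigned_mul {n : ℕ} {σ ρ : Equiv.Perm (P n)} (hσ : IsSigned n σ)
    (hρ : IsSigned n ρ) : IsSigned n (σ * ρ) := fun p => by
  simp only [Equiv.Perm.mul_apply, hρ p, hσ (ρ p)]

lemma signed_apply {n : ℕ} {π : Equiv.Perm (P n)} (hπ : IsSigned n π) (i : Fin n) (b : Bool) :
    π (i, b) = (uf π i, b == (π (i, true)).2) := by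
  cases b
  · have : ((i : Fin n), false) = negP n (i, true) := rfl
    rw [this, hπ (i, true), negP_apply]
    rcases hs : (π (i, true)).2 with _ | _ <;> simp [uf, hs]
  · simp [uf]

lemma uf_mul {n : ℕ} {σ ρ : Equiv.Perm (P n)} (hσ : IsSigned n σ) (i : Fin n) :
    uf (σ * ρ) i = uf σ (uf ρ i) := by
  have h1 : (σ * ρ) (i, true) = σ (ρ (i, true)) := rfl
  have h2 : ρ (i, true) = ((ρ (i, true)).1, (ρ (i, true)).2) := rfl
  rw [uf, h1, h2, signed_apply hσ]
  rfl

lemma epsz_mul {n : ℕ} {σ ρ : Equiv.Perm (P n)} (hσ : IsSigned n σ) (i : Fin n) :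
    epsz (σ * ρ) i = epsz σ (uf ρ i) * epsz ρ i := by
  have h1 : (σ * ρ) (i, true) = σ (ρ (i, true)) := rfl
  have h2 : ρ (i, true) = ((ρ (i, true)).1, (ρ (i, true)).2) := rfl
  rw [epsz, h1, h2, signed_apply hσ]
  rw [show ((ρ (i,true)).2 == (σ ((ρ (i,true)).1, true)).2) = ((σ ((ρ (i,true)).1, true)).2 == (ρ (i,true)).2) from Bool.beq_comm ..]
  exact Zb_beq _ _

lemma uf_one (n : ℕ) (i : Fin n) : uf (1 : Equiv.Perm (P n)) i = i := rfl

lemma epsz_one (n : ℕ) (i : Fin n) : epsz (1 : Equiv.Perm (P n)) i = 1 := rfl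

lemma uf_injective {n : ℕ} {π : Equiv.Perm (P n)} (hπ : IsSigned n π) :
    Function.Injective (uf π) := by
  have hinv : IsSigned n π⁻¹ := isSigned_inv hπ
  have hli : ∀ i, uf π⁻¹ (uf π i) = i := by
    intro i
    rw [← uf_mul hinv, inv_mul_cancel, uf_one]
  exact Function.LeftInverse.injective hli

/-! ### Algebra lemmas in `ℌ_B` -/

variable (n : ℕ) (u v : ℂ)

lemma wB_mul (σ τ : ↥(WB n)) : wB n u v σ * wB n u v τ = wB n u v (σ * τ) := by
  rw [wB, wB, wB, ← map_mul]
  exact RingQuot.mkAlgHom_rel ℂ (RelB.ww σ τ)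

lemma wB_one : wB n u v 1 = 1 := by
  rw [wB]
  have := RingQuot.mkAlgHom_rel ℂ (RelB.wone (n := n) (u := u) (v := v))
  rw [this, map_one]

lemma cB_sq (i : Fin n) : cB n u v i * cB n u v i = 1 := by
  rw [cB, ← map_mul]
  have := RingQuot.mkAlgHom_rel ℂ (RelB.csq (n := n) (u := u) (v := v) i)
  rw [this, map_one]

lemma cB_anti {i j : Fin n} (hij : i ≠ j) :
    cB n u v i * cB n u v j = (-1 : ℂ) • (cB n u v j * cB n u v i) := by
  have h0 : cB n u v i * cB n u v j = -(cB n u v j * cB n u v i) := by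
    rw [cB, cB, ← map_mul, ← map_mul, ← map_neg]
    exact RingQuot.mkAlgHom_rel ℂ (RelB.cc i j hij)
  calc cB n u v i * cB n u v j = -(cB n u v j * cB n u v i) := h0
    _ = (-1 : ℂ) • (cB n u v j * cB n u v i) := (neg_one_smul ℂ _).symm

/-- The signed Clifford generator `c_p` for a signed point `p`. -/
def cS (p : P n) : HB n u v := Zb p.2 • cB n u v p.1

/-- The product of Clifford generators along a list of indices. -/
def cL (l : List (Fin n)) : HB n u v := (l.map (cB n u v)).prod

lemma cL_nil : cL n u v [] = 1 := rfl

lemma cL_cons (a : Fin n) (l : List (Fin n)) :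
    cL n u v (a :: l) = cB n u v a * cL n u v l := by
  simp [cL]

lemma cL_append (l₁ l₂ : List (Fin n)) :
    cL n u v (l₁ ++ l₂) = cL n u v l₁ * cL n u v l₂ := by
  simp [cL]

lemma wB_inv_right (σ : Equiv.Perm (P n)) (hσ : σ ∈ WB n) :
    wB n u v ⟨σ, hσ⟩ * wB n u v ⟨σ⁻¹, inv_mem hσ⟩ = 1 := by
  rw [wB_mul]
  have : (⟨σ, hσ⟩ * ⟨σ⁻¹, inv_mem hσ⟩ : ↥(WB n)) = 1 := Subtype.ext (by simp)
  rw [this, wB_one]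

lemma wB_inv_left (σ : Equiv.Perm (P n)) (hσ : σ ∈ WB n) :
    wB n u v ⟨σ⁻¹, inv_mem hσ⟩ * wB n u v ⟨σ, hσ⟩ = 1 := by
  rw [wB_mul]
  have : (⟨σ⁻¹, inv_mem hσ⟩ * ⟨σ, hσ⟩ : ↥(WB n)) = 1 := Subtype.ext (by simp)
  rw [this, wB_one]

/-- The key conjugation rule: group elements conjugate signed Clifford generators. -/
lemma conjC (σ : Equiv.Perm (P n)) (hσ : σ ∈ WB n) :
    ∀ p : P n, wB n u v ⟨σ, hσ⟩ * cS n u v p = cS n u v (σ p) * wB n u v ⟨σ, hσ⟩ := by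
  induction hσ using Subgroup.closure_induction with
  | mem x hx =>
      rcases hx with ⟨k, h, rfl⟩ | ⟨h, rfl⟩
      · -- sgnSwap case
        rintro ⟨j, b⟩
        set K : Fin n := ⟨k, Nat.lt_of_succ_lt h⟩
        set K1 : Fin n := ⟨k + 1, h⟩
        have hKK1 : K ≠ K1 := by simp [K, K1, Fin.ext_iff]
        by_cases hjK : j = K
        · have happ : sgnSwap n k h (j, b) = (K1, b) := by
            subst hjK
            cases b <;>
              simp [sgnSwap, Equiv.Perm.mul_apply, Equiv.swap_apply_def, hKK1, hKK1.symm,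
                Fin.ext_iff, K, K1]
          rw [happ, hjK]
          have hrel : wB n u v ⟨sgnSwap n k h, sgnSwap_mem_WB n k h⟩ * cB n u v K =
              cB n u v K1 * wB n u v ⟨sgnSwap n k h, sgnSwap_mem_WB n k h⟩ := by
            have := RingQuot.mkAlgHom_rel ℂ (RelB.sc1 (u := u) (v := v) k h)
            simpa [wB, cB, map_mul] using this
          simp only [cS, smul_mul_assoc, mul_smul_comm, hrel]
        · by_cases hjK1 : j = K1
          · have happ : sgnSwap n k h (j, b) = (K, b) := by
              subst hjK1
              cases b <;>
                simp [sgnSwap, Equiv.Perm.mul_apply, Equiv.swap_apply_def, hKK1, hKK1.symm,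
                  Fin.ext_iff, K, K1]
            rw [happ, hjK1]
            have hrel : wB n u v ⟨sgnSwap n k h, sgnSwap_mem_WB n k h⟩ * cB n u v K1 =
                cB n u v K * wB n u v ⟨sgnSwap n k h, sgnSwap_mem_WB n k h⟩ := by
              have := RingQuot.mkAlgHom_rel ℂ (RelB.sc2 (u := u) (v := v) k h)
              simpa [wB, cB, map_mul] using this
            simp only [cS, smul_mul_assoc, mul_smul_comm, hrel]
          · have happ : sgnSwap n k h (j, b) = (j, b) := by
              cases b <;>
                simp [sgnSwap, Equiv.Perm.mul_apply, Equiv.swap_apply_def, hjK, hjK1, K, K1]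
            rw [happ]
            have h1 : (j : ℕ) ≠ k := fun hc => hjK (Fin.ext hc)
            have h2 : (j : ℕ) ≠ k + 1 := fun hc => hjK1 (Fin.ext hc)
            have hrel : wB n u v ⟨sgnSwap n k h, sgnSwap_mem_WB n k h⟩ * cB n u v j =
                cB n u v j * wB n u v ⟨sgnSwap n k h, sgnSwap_mem_WB n k h⟩ := by
              have := RingQuot.mkAlgHom_rel ℂ (RelB.sc3 (u := u) (v := v) k h j h1 h2)
              simpa [wB, cB, map_mul] using this
            simp only [cS, smul_mul_assoc, mul_smul_comm, hrel]
      · -- sBn case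
        rintro ⟨j, b⟩
        set N : Fin n := ⟨n - 1, Nat.sub_lt h Nat.one_pos⟩
        by_cases hjN : j = N
        · have happ : sBn n h (j, b) = (N, !b) := by
            subst hjN
            cases b <;> simp [sBn, Equiv.swap_apply_def, N]
          rw [happ, hjN]
          have hrel : wB n u v ⟨sBn n h, sBn_mem_WB n h⟩ * cB n u v N =
              (-1 : ℂ) • (cB n u v N * wB n u v ⟨sBn n h, sBn_mem_WB n h⟩) := by
            have h0 := RingQuot.mkAlgHom_rel ℂ (RelB.snc (u := u) (v := v) h)
            have h1 : wB n u v ⟨sBn n h, sBn_mem_WB n h⟩ * cB n u v N =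
                -(cB n u v N * wB n u v ⟨sBn n h, sBn_mem_WB n h⟩) := by
              simpa [wB, cB, map_mul] using h0
            calc wB n u v ⟨sBn n h, sBn_mem_WB n h⟩ * cB n u v N
                = -(cB n u v N * wB n u v ⟨sBn n h, sBn_mem_WB n h⟩) := h1
              _ = (-1 : ℂ) • (cB n u v N * wB n u v ⟨sBn n h, sBn_mem_WB n h⟩) :=
                  (neg_one_smul ℂ _).symm
          simp only [cS, smul_mul_assoc, mul_smul_comm, hrel, Zb_not, smul_smul]
          rw [mul_neg_one]
        · have happ : sBn n h (j, b) = (j, b) := by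
            cases b <;> simp [sBn, Equiv.swap_apply_def, hjN, N]
          rw [happ]
          have h1 : (j : ℕ) ≠ n - 1 := fun hc => hjN (Fin.ext hc)
          have hrel : wB n u v ⟨sBn n h, sBn_mem_WB n h⟩ * cB n u v j =
              cB n u v j * wB n u v ⟨sBn n h, sBn_mem_WB n h⟩ := by
            have := RingQuot.mkAlgHom_rel ℂ (RelB.snc' (u := u) (v := v) h j h1)
            simpa [wB, cB, map_mul] using this
          simp only [cS, smul_mul_assoc, mul_smul_comm, hrel]
  | one =>
      intro p
      have h1 : (⟨(1 : Equiv.Perm (P n)), one_mem _⟩ : ↥(WB n)) = 1 := rfl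
      rw [h1, wB_one, one_mul, mul_one]
      rfl
  | mul x y hx hy ihx ihy =>
      intro p
      have hxy : (⟨x * y, mul_mem hx hy⟩ : ↥(WB n)) = ⟨x, hx⟩ * ⟨y, hy⟩ := rfl
      have happ : (x * y) p = x (y p) := rfl
      rw [hxy, happ, ← wB_mul, mul_assoc, ihy p, ← mul_assoc, ihx (y p), mul_assoc]
  | inv x hx ihx =>
      intro p
      have key := ihx (x⁻¹ p)
      have hxp : x (x⁻¹ p) = p := by simp
      rw [hxp] at key
      have hR := wB_inv_right n u v x hx
      have hL := wB_inv_left n u v x hx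
      calc wB n u v ⟨x⁻¹, inv_mem hx⟩ * cS n u v p
          = wB n u v ⟨x⁻¹, inv_mem hx⟩ * (cS n u v p * (wB n u v ⟨x, hx⟩ *
              wB n u v ⟨x⁻¹, inv_mem hx⟩)) := by rw [hR, mul_one]
        _ = wB n u v ⟨x⁻¹, inv_mem hx⟩ * ((cS n u v p * wB n u v ⟨x, hx⟩) *
              wB n u v ⟨x⁻¹, inv_mem hx⟩) := by simp only [mul_assoc]
        _ = wB n u v ⟨x⁻¹, inv_mem hx⟩ * ((wB n u v ⟨x, hx⟩ * cS n u v (x⁻¹ p)) *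
              wB n u v ⟨x⁻¹, inv_mem hx⟩) := by rw [← key]
        _ = (wB n u v ⟨x⁻¹, inv_mem hx⟩ * wB n u v ⟨x, hx⟩) * (cS n u v (x⁻¹ p) *
              wB n u v ⟨x⁻¹, inv_mem hx⟩) := by simp only [mul_assoc]
        _ = cS n u v (x⁻¹ p) * wB n u v ⟨x⁻¹, inv_mem hx⟩ := by rw [hL, one_mul]

lemma conj1 (σ : Equiv.Perm (P n)) (hσ : σ ∈ WB n) (i : Fin n) :
    wB n u v ⟨σ, hσ⟩ * cB n u v i =
      epsz σ i • (cB n u v (uf σ i) * wB n u v ⟨σ, hσ⟩) := by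
  have := conjC n u v σ hσ (i, true)
  have h1 : cS n u v (i, true) = cB n u v i := by simp [cS, Zb]
  have h2 : cS n u v (σ (i, true)) = epsz σ i • cB n u v (uf σ i) := rfl
  rw [h1, h2] at this
  rw [this, smul_mul_assoc]

lemma conjL (σ : Equiv.Perm (P n)) (hσ : σ ∈ WB n) (l : List (Fin n)) :
    wB n u v ⟨σ, hσ⟩ * cL n u v l =
      (l.map (epsz σ)).prod • (cL n u v (l.map (uf σ)) * wB n u v ⟨σ, hσ⟩) := by
  induction l with
  | nil => simp [cL_nil]
  | cons a l ih =>
      rw [cL_cons, ← mul_assoc, conj1 n u v σ hσ a, smul_mul_assoc, mul_assoc, ih,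
        mul_smul_comm, smul_smul, List.map_cons, List.map_cons, List.prod_cons, cL_cons]
      simp only [mul_assoc]

lemma cL_move (a : Fin n) (T : List (Fin n)) (ha : a ∉ T) :
    cL n u v T * cB n u v a = ((-1 : ℂ) ^ T.length) • (cB n u v a * cL n u v T) := by
  induction T with
  | nil => simp [cL_nil]
  | cons b T ih =>
      have hab : b ≠ a := fun hc => ha (by simp [hc])
      have ha' : a ∉ T := fun hc => ha (by simp [hc])
      rw [cL_cons, mul_assoc, ih ha', mul_smul_comm, ← mul_assoc, cB_anti n u v hab,
        smul_mul_assoc, smul_smul, mul_assoc, ← cL_cons, List.length_cons, pow_succ]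

lemma cL_sq (T : List (Fin n)) (hT : T.Nodup) :
    ∃ s : ℂ, s ≠ 0 ∧ cL n u v T * cL n u v T = s • 1 := by
  induction T with
  | nil => exact ⟨1, one_ne_zero, by simp [cL_nil]⟩
  | cons a T ih =>
      obtain ⟨s, hs, hsq⟩ := ih (List.Nodup.of_cons hT)
      have ha : a ∉ T := by simp [List.nodup_cons] at hT; exact hT.1
      refine ⟨(-1 : ℂ) ^ T.length * s, by simp [hs], ?_⟩
      rw [cL_cons]
      calc cB n u v a * cL n u v T * (cB n u v a * cL n u v T)
          = cB n u v a * (cL n u v T * cB n u v a) * cL n u v T := by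
            simp only [mul_assoc]
        _ = cB n u v a * ((-1 : ℂ) ^ T.length • (cB n u v a * cL n u v T)) * cL n u v T := by
            rw [cL_move n u v a T ha]
        _ = (-1 : ℂ) ^ T.length • (cB n u v a * cB n u v a * (cL n u v T * cL n u v T)) := by
            rw [mul_smul_comm, smul_mul_assoc]
            simp only [mul_assoc]
        _ = (-1 : ℂ) ^ T.length • (cL n u v T * cL n u v T) := by rw [cB_sq, one_mul]
        _ = ((-1 : ℂ) ^ T.length * s) • (1 : HB n u v) := by rw [hsq, smul_smul]

lemma key_commutator (A C : HB n u v) (s : ℂ) (hs : s ≠ 0)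
    (h1 : A * C = (-1 : ℂ) • (C * A)) (h2 : C * C = s • 1) : A ∈ commSpan (HB n u v) := by
  have hmem : (A * C) * C - C * (A * C) ∈ commSpan (HB n u v) :=
    Submodule.subset_span ⟨A * C, C, rfl⟩
  have hcalc : (A * C) * C - C * (A * C) = (2 * s) • A := by
    have e1 : (A * C) * C = s • A := by rw [mul_assoc, h2, mul_smul_comm, mul_one]
    have e2 : C * (A * C) = (-1 : ℂ) • (s • A) := by
      rw [h1, mul_smul_comm, ← mul_assoc, h2, smul_mul_assoc, one_mul]
    rw [e1, e2, smul_smul]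
    module
  have hA : A = ((2 * s)⁻¹) • ((A * C) * C - C * (A * C)) := by
    rw [hcalc, smul_smul, inv_mul_cancel₀ (by simp [hs]), one_smul]
  rw [hA]
  exact Submodule.smul_mem _ _ hmem

/-! ### Partial sums -/

lemma sum_take_le (l : List ℕ) (k : ℕ) : (l.take k).sum ≤ l.sum := by
  conv_rhs => rw [← List.take_append_drop k l]
  rw [List.sum_append]
  omega

lemma sum_take_mono (l : List ℕ) {k k' : ℕ} (h : k ≤ k') :
    (l.take k).sum ≤ (l.take k').sum := by
  have heq : l.take k = (l.take k').take k := by rw [List.take_take, Nat.min_eq_left h]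
  rw [heq]
  exact sum_take_le _ _

lemma sum_take_succ' (l : List ℕ) (k : ℕ) (hk : k < l.length) :
    (l.take (k + 1)).sum = (l.take k).sum + l.getD k 0 := by
  rw [List.sum_take_succ l k hk, List.getD_eq_getElem l 0 hk]

/-! ### Explicit action of the standard cycles -/

lemma fin_sub_cast_val {n : ℕ} [NeZero n] {a j : ℕ} (ha : a < n) (hj : j < n) :
    (((⟨j, hj⟩ : Fin n) - ((a : ℕ) : Fin n)).val) = if a ≤ j then j - a else n + j - a := by
  rw [Fin.sub_def]
  simp only [Fin.val_cast_of_lt ha]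
  by_cases h : a ≤ j
  · rw [if_pos h]
    have h1 : n - a + j = n + (j - a) := by omega
    rw [h1, Nat.add_mod_left, Nat.mod_eq_of_lt (a := j - a) (b := n) (by omega)]
  · rw [if_neg h]
    have h2 : n - a + j = n + j - a := by omega
    rw [h2]
    exact Nat.mod_eq_of_lt (by omega)

lemma blockCycleF_act {n a m j : ℕ} (hm : 0 < m) (hmn : a + m ≤ n) (hj : j < m)
    (hin : a + j < n) (hres : (if j = m - 1 then a else a + j + 1) < n) :
    blockCycleF n a m ⟨a + j, hin⟩ =
      ⟨if j = m - 1 then a else a + j + 1, hres⟩ := by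
  have h0 : 0 < n := by omega
  haveI : NeZero n := ⟨by omega⟩
  obtain ⟨n', rfl⟩ : ∃ n', n = n' + 1 := ⟨n - 1, by omega⟩
  rw [blockCycleF, dif_pos h0]
  simp only [Equiv.Perm.mul_apply, Equiv.Perm.inv_def, Equiv.addLeft_symm, Equiv.coe_addLeft]
  have ht : -((a : ℕ) : Fin (n' + 1)) + ⟨a + j, hin⟩ = ((j : ℕ) : Fin (n' + 1)) := by
    have h1 : -((a : ℕ) : Fin (n' + 1)) + ⟨a + j, hin⟩ =
        ⟨a + j, hin⟩ - ((a : ℕ) : Fin (n' + 1)) := by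
      rw [sub_eq_neg_add]
    rw [h1]
    apply Fin.ext
    rw [fin_sub_cast_val (by omega) hin, Fin.val_cast_of_lt (n := n' + 1) (a := j) (by omega)]
    simp [Nat.le_add_right]
  rw [ht]
  by_cases hje : j = m - 1
  · have hcast : ((j : ℕ) : Fin (n' + 1)) = ((m - 1 : ℕ) : Fin (n' + 1)) := by rw [hje]
    rw [Fin.cycleRange_of_eq hcast, add_zero]
    apply Fin.ext
    show ((a : ℕ) : Fin (n' + 1)).val = if j = m - 1 then a else a + j + 1
    rw [Fin.val_cast_of_lt (n := n' + 1) (a := a) (by omega), if_pos hje]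
  · have hlt : ((j : ℕ) : Fin (n' + 1)) < ((m - 1 : ℕ) : Fin (n' + 1)) := by
      rw [Fin.lt_def, Fin.val_cast_of_lt (n := n' + 1) (a := j) (by omega),
        Fin.val_cast_of_lt (n := n' + 1) (a := m - 1) (by omega)]
      omega
    rw [Fin.cycleRange_of_lt hlt]
    apply Fin.ext
    show ((((a : ℕ) : Fin (n' + 1)) + (((j : ℕ) : Fin (n' + 1)) + 1)).val) =
      if j = m - 1 then a else a + j + 1
    rw [if_neg hje, Fin.val_add, Fin.val_add,
      Fin.val_cast_of_lt (n := n' + 1) (a := a) (by omega),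
      Fin.val_cast_of_lt (n := n' + 1) (a := j) (by omega)]
    have h1 : ((1 : Fin (n' + 1)) : ℕ) = 1 % (n' + 1) := rfl
    rw [h1]
    have hj1 : j + 1 < n' + 1 := by omega
    have h2 : 1 % (n' + 1) = 1 := Nat.mod_eq_of_lt (by omega)
    rw [h2, Nat.mod_eq_of_lt hj1, Nat.mod_eq_of_lt (by omega)]
    omega

lemma blockCycleF_fix {n a m j : ℕ} (hm : 0 < m) (hmn : a + m ≤ n) (hj : j < n)
    (hout : j < a ∨ a + m ≤ j) :
    blockCycleF n a m ⟨j, hj⟩ = ⟨j, hj⟩ := by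
  have h0 : 0 < n := by omega
  haveI : NeZero n := ⟨by omega⟩
  obtain ⟨n', rfl⟩ : ∃ n', n = n' + 1 := ⟨n - 1, by omega⟩
  rw [blockCycleF, dif_pos h0]
  simp only [Equiv.Perm.mul_apply, Equiv.Perm.inv_def, Equiv.addLeft_symm, Equiv.coe_addLeft]
  set t : Fin (n' + 1) := -((a : ℕ) : Fin (n' + 1)) + ⟨j, hj⟩ with ht
  have htv : (t : ℕ) = if a ≤ j then j - a else n' + 1 + j - a := by
    rw [ht, ← sub_eq_neg_add]
    exact fin_sub_cast_val (by omega) hj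
  have hgt : ((m - 1 : ℕ) : Fin (n' + 1)) < t := by
    rw [Fin.lt_def, Fin.val_cast_of_lt (n := n' + 1) (a := m - 1) (by omega), htv]
    by_cases h : a ≤ j
    · rw [if_pos h]; omega
    · rw [if_neg h]; omega
  rw [Fin.cycleRange_of_gt hgt, ht]
  exact add_neg_cancel_left _ _

lemma posCycle_apply {n : ℕ} (a m : ℕ) (x : Fin n) (b : Bool) :
    posCycle n a m (x, b) = (blockCycleF n a m x, b) := rfl

lemma posCycle_act {n a m j : ℕ} (hm : 0 < m) (hmn : a + m ≤ n) (hj : j < m)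
    (hin : a + j < n) (hres : (if j = m - 1 then a else a + j + 1) < n) (b : Bool) :
    posCycle n a m (⟨a + j, hin⟩, b) = (⟨if j = m - 1 then a else a + j + 1, hres⟩, b) := by
  rw [posCycle_apply, blockCycleF_act hm hmn hj hin hres]

lemma posCycle_fix {n a m j : ℕ} (hm : 0 < m) (hmn : a + m ≤ n) (hj : j < n)
    (hout : j < a ∨ a + m ≤ j) (b : Bool) :
    posCycle n a m (⟨j, hj⟩, b) = (⟨j, hj⟩, b) := by
  rw [posCycle_apply, blockCycleF_fix hm hmn hj hout]

lemma flipAt_fix {n k j : ℕ} (hk : k < n) (hj : j < n) (hne : j ≠ k) (b : Bool) :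
    flipAt n k (⟨j, hj⟩, b) = (⟨j, hj⟩, b) := by
  have h0 : 0 < n := by omega
  haveI : NeZero n := ⟨by omega⟩
  rw [flipAt, dif_pos h0]
  apply Equiv.swap_apply_of_ne_of_ne <;>
    · intro hc
      apply hne
      have h2 := congrArg Prod.fst hc
      simp only at h2
      rw [← Fin.val_cast_of_lt (n := n) hk]
      exact congrArg Fin.val h2

lemma flipAt_act {n k : ℕ} (hk : k < n) (b : Bool) :
    flipAt n k (⟨k, hk⟩, b) = (⟨k, hk⟩, !b) := by
  have h0 : 0 < n := by omega
  haveI : NeZero n := ⟨by omega⟩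
  rw [flipAt, dif_pos h0]
  have hcast : ((k : ℕ) : Fin n) = ⟨k, hk⟩ := by
    apply Fin.ext
    rw [Fin.val_cast_of_lt hk]
  rw [hcast]
  cases b
  · exact Equiv.swap_apply_right _ _
  · exact Equiv.swap_apply_left _ _

lemma negCycle_act {n a m j : ℕ} (hm : 0 < m) (hmn : a + m ≤ n) (hj : j < m)
    (hin : a + j < n) (hres : (if j = m - 1 then a else a + j + 1) < n) (b : Bool) :
    negCycle n a m (⟨a + j, hin⟩, b) =
      (⟨if j = m - 1 then a else a + j + 1, hres⟩, if j = m - 1 then !b else b) := by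
  rw [negCycle, Equiv.Perm.mul_apply]
  by_cases hje : j = m - 1
  · have hlast : a + m - 1 < n := by omega
    have hx : (⟨a + j, hin⟩ : Fin n) = ⟨a + m - 1, hlast⟩ := Fin.ext (by simp; omega)
    have h1 : flipAt n (a + m - 1) (⟨a + j, hin⟩, b) = (⟨a + j, hin⟩, !b) := by
      rw [hx]
      exact flipAt_act hlast b
    rw [h1, posCycle_act hm hmn hj hin hres]
    exact congrArg (Prod.mk _) (if_pos hje).symm
  · have h1 : flipAt n (a + m - 1) (⟨a + j, hin⟩, b) = (⟨a + j, hin⟩, b) :=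
      flipAt_fix (by omega) hin (by omega) b
    rw [h1, posCycle_act hm hmn hj hin hres]
    exact congrArg (Prod.mk _) (if_neg hje).symm

lemma negCycle_fix {n a m j : ℕ} (hm : 0 < m) (hmn : a + m ≤ n) (hj : j < n)
    (hout : j < a ∨ a + m ≤ j) (b : Bool) :
    negCycle n a m (⟨j, hj⟩, b) = (⟨j, hj⟩, b) := by
  rw [negCycle, Equiv.Perm.mul_apply]
  have h1 : flipAt n (a + m - 1) (⟨j, hj⟩, b) = (⟨j, hj⟩, b) :=
    flipAt_fix (by omega) hj (by omega) b
  rw [h1, posCycle_fix hm hmn hj hout]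

/-! ### Signedness of the standard representative -/

lemma posCycle_isSigned (n a m : ℕ) : IsSigned n (posCycle n a m) := fun _ => rfl

lemma flipAt_isSigned (n k : ℕ) : IsSigned n (flipAt n k) := by
  intro p
  rcases p with ⟨x, b⟩
  by_cases h0 : 0 < n
  · haveI : NeZero n := ⟨by omega⟩
    rw [flipAt, dif_pos h0, negP_apply, negP_apply]
    by_cases hx : x = ((k : ℕ) : Fin n)
    · subst hx
      cases b <;> simp [Equiv.swap_apply_def]
    · have h1 : ∀ b' : Bool, Equiv.swap (((k : ℕ) : Fin n), true) (((k : ℕ) : Fin n), false) (x, b')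
          = (x, b') := by
        intro b'
        apply Equiv.swap_apply_of_ne_of_ne <;> exact fun hc => hx (congrArg Prod.fst hc)
      rw [h1, h1]
  · rw [flipAt, dif_neg h0]
    rfl

lemma negCycle_isSigned (n a m : ℕ) : IsSigned n (negCycle n a m) :=
  isSigned_mul (posCycle_isSigned n a m) (flipAt_isSigned n (a + m - 1))

lemma isSigned_listProd {n : ℕ} (L : List (Equiv.Perm (P n)))
    (h : ∀ σ ∈ L, IsSigned n σ) : IsSigned n L.prod := by
  induction L with
  | nil => exact isSigned_one n
  | cons a L ih =>
      rw [List.prod_cons]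
      exact isSigned_mul (h a (by simp)) (ih fun σ hσ => h σ (by simp [hσ]))

lemma stdRep_isSigned (n : ℕ) (ll lm : List ℕ) : IsSigned n (stdRep n ll lm) := by
  apply isSigned_mul
  · apply isSigned_listProd
    intro σ hσ
    simp only [List.mem_map] at hσ
    obtain ⟨k, _, rfl⟩ := hσ
    exact posCycle_isSigned n _ _
  · apply isSigned_listProd
    intro σ hσ
    simp only [List.mem_map] at hσ
    obtain ⟨k, _, rfl⟩ := hσ
    exact negCycle_isSigned n _ _

/-! ### Products of permutations applied pointwise -/

lemma listProd_apply_fix {α : Type*} (L : List (Equiv.Perm α)) (q : α)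
    (h : ∀ σ ∈ L, σ q = q) : L.prod q = q := by
  induction L with
  | nil => rfl
  | cons a L ih =>
      rw [List.prod_cons, Equiv.Perm.mul_apply, ih (fun σ hσ => h σ (by simp [hσ])),
        h a (by simp)]

lemma prod_range_apply {α : Type*} (f : ℕ → Equiv.Perm α) (r k : ℕ) (hk : k < r) (q q' : α)
    (hfix2 : ∀ j, k < j → j < r → f j q = q) (hact : f k q = q')
    (hfix1 : ∀ j, j < k → f j q' = q') :
    ((List.range r).map f).prod q = q' := by
  induction r with
  | zero => omega
  | succ r ih =>
      rw [List.range_succ, List.map_append, List.prod_append, List.map_singleton,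
        List.prod_singleton, Equiv.Perm.mul_apply]
      by_cases hkr : k = r
      · subst hkr
        rw [hact]
        apply listProd_apply_fix
        intro σ hσ
        simp only [List.mem_map, List.mem_range] at hσ
        obtain ⟨j, hj, rfl⟩ := hσ
        exact hfix1 j hj
      · rw [hfix2 r (by omega) (by omega)]
        exact ih (by omega) (fun j h1 h2 => hfix2 j h1 (by omega))

lemma take_getD_le (l : List ℕ) (k : ℕ) (hk : k < l.length) :
    (l.take k).sum + l.getD k 0 ≤ l.sum := by
  rw [← sum_take_succ' l k hk]
  exact sum_take_le _ _

lemma getD_pos (l : List ℕ) (hl : ∀ x ∈ l, 0 < x) (k : ℕ) (hk : k < l.length) :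
    0 < l.getD k 0 := by
  rw [List.getD_eq_getElem l 0 hk]
  exact hl _ (List.getElem_mem hk)

lemma stdRep_pos_act (ll lm : List ℕ)
    (hll : ∀ x ∈ ll, 0 < x) (hlm : ∀ x ∈ lm, 0 < x)
    (hsum : ll.sum + lm.sum ≤ n)
    (k0 : ℕ) (hk0 : k0 < ll.length) (j : ℕ) (hj : j < ll.getD k0 0) (b : Bool)
    (hin : (ll.take k0).sum + j < n)
    (hres : (if j = ll.getD k0 0 - 1 then (ll.take k0).sum
        else (ll.take k0).sum + j + 1) < n) :
    stdRep n ll lm (⟨(ll.take k0).sum + j, hin⟩, b) =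
      (⟨if j = ll.getD k0 0 - 1 then (ll.take k0).sum
        else (ll.take k0).sum + j + 1, hres⟩, b) := by
  have hm0 : 0 < ll.getD k0 0 := getD_pos ll hll k0 hk0
  have hblock : (ll.take k0).sum + ll.getD k0 0 ≤ ll.sum := take_getD_le ll k0 hk0
  have hsucc : (ll.take (k0 + 1)).sum = (ll.take k0).sum + ll.getD k0 0 :=
    sum_take_succ' ll k0 hk0
  rw [stdRep, Equiv.Perm.mul_apply]
  have hneg : ((List.range lm.length).map fun k =>
      negCycle n (ll.sum + (lm.take k).sum) (lm.getD k 0)).prod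
        (⟨(ll.take k0).sum + j, hin⟩, b) = (⟨(ll.take k0).sum + j, hin⟩, b) := by
    apply listProd_apply_fix
    intro σ hσ
    simp only [List.mem_map, List.mem_range] at hσ
    obtain ⟨k, hk, rfl⟩ := hσ
    have h1 : 0 < lm.getD k 0 := getD_pos lm hlm k hk
    have h2 : (lm.take k).sum + lm.getD k 0 ≤ lm.sum := take_getD_le lm k hk
    exact negCycle_fix h1 (by omega) hin (by omega) b
  rw [hneg]
  apply prod_range_apply _ ll.length k0 hk0
  · intro k h1 h2
    have hp : 0 < ll.getD k 0 := getD_pos ll hll k h2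
    have hq : (ll.take k).sum + ll.getD k 0 ≤ ll.sum := take_getD_le ll k h2
    have hmono : (ll.take (k0 + 1)).sum ≤ (ll.take k).sum := sum_take_mono ll (by omega)
    exact posCycle_fix hp (by omega) hin (by omega) b
  · exact posCycle_act hm0 (by omega) hj hin hres b
  · intro k h1
    have hp : 0 < ll.getD k 0 := getD_pos ll hll k (by omega)
    have hq : (ll.take (k + 1)).sum = (ll.take k).sum + ll.getD k 0 :=
      sum_take_succ' ll k (by omega)
    have hmono : (ll.take (k + 1)).sum ≤ (ll.take k0).sum := sum_take_mono ll (by omega)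
    refine posCycle_fix hp (by omega) hres (Or.inr ?_) b
    by_cases hje : j = ll.getD k0 0 - 1
    · rw [if_pos hje]; omega
    · rw [if_neg hje]; omega

lemma stdRep_neg_act (ll lm : List ℕ)
    (hll : ∀ x ∈ ll, 0 < x) (hlm : ∀ x ∈ lm, 0 < x)
    (hsum : ll.sum + lm.sum ≤ n)
    (k0 : ℕ) (hk0 : k0 < lm.length) (j : ℕ) (hj : j < lm.getD k0 0) (b : Bool)
    (hin : ll.sum + (lm.take k0).sum + j < n)
    (hres : (if j = lm.getD k0 0 - 1 then ll.sum + (lm.take k0).sum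
        else ll.sum + (lm.take k0).sum + j + 1) < n) :
    stdRep n ll lm (⟨ll.sum + (lm.take k0).sum + j, hin⟩, b) =
      (⟨if j = lm.getD k0 0 - 1 then ll.sum + (lm.take k0).sum
        else ll.sum + (lm.take k0).sum + j + 1, hres⟩,
        if j = lm.getD k0 0 - 1 then !b else b) := by
  have hm0 : 0 < lm.getD k0 0 := getD_pos lm hlm k0 hk0
  have hblock : (lm.take k0).sum + lm.getD k0 0 ≤ lm.sum := take_getD_le lm k0 hk0
  have hsucc : (lm.take (k0 + 1)).sum = (lm.take k0).sum + lm.getD k0 0 :=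
    sum_take_succ' lm k0 hk0
  rw [stdRep, Equiv.Perm.mul_apply]
  have hneg : ((List.range lm.length).map fun k =>
      negCycle n (ll.sum + (lm.take k).sum) (lm.getD k 0)).prod
        (⟨ll.sum + (lm.take k0).sum + j, hin⟩, b) =
      (⟨if j = lm.getD k0 0 - 1 then ll.sum + (lm.take k0).sum
        else ll.sum + (lm.take k0).sum + j + 1, hres⟩,
        if j = lm.getD k0 0 - 1 then !b else b) := by
    apply prod_range_apply _ lm.length k0 hk0
    · intro k h1 h2
      have hp : 0 < lm.getD k 0 := getD_pos lm hlm k h2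
      have hq : (lm.take k).sum + lm.getD k 0 ≤ lm.sum := take_getD_le lm k h2
      have hmono : (lm.take (k0 + 1)).sum ≤ (lm.take k).sum := sum_take_mono lm (by omega)
      exact negCycle_fix hp (by omega) hin (by omega) b
    · exact negCycle_act hm0 (by omega) hj hin hres b
    · intro k h1
      have hp : 0 < lm.getD k 0 := getD_pos lm hlm k (by omega)
      have hq : (lm.take (k + 1)).sum = (lm.take k).sum + lm.getD k 0 :=
        sum_take_succ' lm k (by omega)
      have hmono : (lm.take (k + 1)).sum ≤ (lm.take k0).sum := sum_take_mono lm (by omega)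
      refine negCycle_fix hp (by omega) hres (Or.inr ?_) _
      by_cases hje : j = lm.getD k0 0 - 1
      · rw [if_pos hje]; omega
      · rw [if_neg hje]; omega
  rw [hneg]
  apply listProd_apply_fix
  intro σ hσ
  simp only [List.mem_map, List.mem_range] at hσ
  obtain ⟨k, hk, rfl⟩ := hσ
  have hp : 0 < ll.getD k 0 := getD_pos ll hll k hk
  have hq : (ll.take k).sum + ll.getD k 0 ≤ ll.sum := take_getD_le ll k hk
  refine posCycle_fix hp (by omega) hres (Or.inr ?_) _
  by_cases hje : j = lm.getD k0 0 - 1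
  · rw [if_pos hje]; omega
  · rw [if_neg hje]; omega

lemma engine [NeZero n] (w τ std : Equiv.Perm (P n)) (hw : w ∈ WB n)
    (hτ : IsSigned n τ) (hstd : IsSigned n std) (hconj : w = τ * std * τ⁻¹)
    (a0 m0 : ℕ) (hm0 : 0 < m0) (hblk : a0 + m0 ≤ n)
    (huf : ∀ j, j < m0 → uf std ((a0 + j : ℕ) : Fin n) =
      (((if j = m0 - 1 then a0 else a0 + j + 1) : ℕ) : Fin n))
    (hsign : ((List.range m0).map fun j => epsz std ((a0 + j : ℕ) : Fin n)).prod *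
      (-1 : ℂ) ^ (m0 - 1) = -1) :
    wB n u v ⟨w, hw⟩ ∈ commSpan (HB n u v) := by
  have hn : 0 < n := Nat.pos_of_ne_zero (NeZero.ne n)
  have hsg_w : IsSigned n w := by
    rw [hconj]
    exact isSigned_mul (isSigned_mul hτ hstd) (isSigned_inv hτ)
  have hwt : w * τ = τ * std := by rw [hconj]; group
  have hpt : ∀ i, uf w (uf τ i) = uf τ (uf std i) := fun i => by
    rw [← uf_mul hsg_w, hwt, uf_mul hτ]
  have hpt2 : ∀ i, epsz w (uf τ i) = epsz τ (uf std i) * epsz std i * epsz τ i := by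
    intro i
    have e1 : epsz w (uf τ i) * epsz τ i = epsz τ (uf std i) * epsz std i := by
      rw [← epsz_mul hsg_w, hwt, epsz_mul hτ]
    calc epsz w (uf τ i) = epsz w (uf τ i) * (epsz τ i * epsz τ i) := by
          rw [epsz_sq, mul_one]
      _ = (epsz w (uf τ i) * epsz τ i) * epsz τ i := by ring
      _ = epsz τ (uf std i) * epsz std i * epsz τ i := by rw [e1]
  -- index lists
  set B : List (Fin n) := (List.range m0).map (fun j => ((a0 + j : ℕ) : Fin n)) with hB
  set Btl : List (Fin n) := (List.range (m0 - 1)).map (fun j => ((a0 + j + 1 : ℕ) : Fin n))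
    with hBtl
  have hBlen : B.length = m0 := by simp [hB]
  have hBtllen : Btl.length = m0 - 1 := by simp [hBtl]
  have hBcons : B = ((a0 : ℕ) : Fin n) :: Btl := by
    apply List.ext_getElem (by simp [hB, hBtl]; omega)
    intro k hk1 hk2
    rcases k with _ | k'
    · simp [hB]
    · simp only [hB, hBtl, List.getElem_map, List.getElem_range, List.getElem_cons_succ]
      congr 1
  have hmap : B.map (uf std) = Btl ++ [((a0 : ℕ) : Fin n)] := by
    apply List.ext_getElem (by simp [hB, hBtl]; omega)
    intro k hk1 hk2
    have hk : k < m0 := by simpa [hB] using hk1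
    have hL : (B.map (uf std))[k] = uf std ((a0 + k : ℕ) : Fin n) := by
      simp [hB]
    rw [hL, huf k hk, List.getElem_append]
    by_cases hlt : k < Btl.length
    · rw [dif_pos hlt]
      have hkne : k ≠ m0 - 1 := by rw [hBtllen] at hlt; omega
      simp only [hBtl, List.getElem_map, List.getElem_range]
      rw [if_neg hkne]
    · rw [dif_neg hlt]
      have hke : k = m0 - 1 := by rw [hBtllen] at hlt; omega
      simp only [List.getElem_singleton]
      rw [if_pos hke]
  have hcastinj : ∀ x ∈ List.range m0, ∀ y ∈ List.range m0,
      ((a0 + x : ℕ) : Fin n) = ((a0 + y : ℕ) : Fin n) → x = y := by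
    intro x hx y hy hxy
    rw [List.mem_range] at hx hy
    have := congrArg Fin.val hxy
    rw [Fin.val_cast_of_lt (by omega), Fin.val_cast_of_lt (by omega)] at this
    omega
  have hNodupB : B.Nodup := List.Nodup.map_on hcastinj List.nodup_range
  set L : List (Fin n) := B.map (uf τ) with hLdef
  have hNodupL : L.Nodup := List.Nodup.map (uf_injective hτ) hNodupB
  have hLcons : L = uf τ ((a0 : ℕ) : Fin n) :: Btl.map (uf τ) := by
    rw [hLdef, hBcons, List.map_cons]
  have hLmap : L.map (uf w) = Btl.map (uf τ) ++ [uf τ ((a0 : ℕ) : Fin n)] := by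
    rw [hLdef, List.map_map]
    have h1 : B.map (uf w ∘ uf τ) = B.map (uf τ ∘ uf std) :=
      List.map_congr_left (fun i _ => hpt i)
    rw [h1, ← List.map_map, hmap, List.map_append, List.map_singleton]
  have hhd : uf τ ((a0 : ℕ) : Fin n) ∉ Btl.map (uf τ) := by
    have := hNodupL
    rw [hLcons, List.nodup_cons] at this
    exact this.1
  -- sign bookkeeping
  have hP3 : (B.map (epsz τ)).prod * (B.map (epsz τ)).prod = 1 := by
    rw [← List.prod_map_mul]
    apply List.prod_eq_one
    intro x hx
    simp only [List.mem_map] at hx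
    obtain ⟨i, _, rfl⟩ := hx
    exact epsz_sq τ i
  have hP1 : ((B.map (uf std)).map (epsz τ)).prod = (B.map (epsz τ)).prod := by
    rw [hmap, hBcons]
    simp only [List.map_append, List.map_singleton, List.prod_append, List.prod_singleton,
      List.map_cons, List.prod_cons]
    simp [mul_comm]
  have hE : (L.map (epsz w)).prod = (B.map (epsz std)).prod := by
    rw [hLdef, List.map_map]
    have h1 : B.map (epsz w ∘ uf τ) =
        B.map (fun i => (epsz τ (uf std i) * epsz std i) * epsz τ i) := by
      apply List.map_congr_left
      intro i _
      exact hpt2 i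
    have hcomp : B.map (fun i => epsz τ (uf std i)) = (B.map (uf std)).map (epsz τ) :=
      (List.map_map (g := epsz τ) (f := uf std) (l := B)).symm
    rw [h1, List.prod_map_mul, List.prod_map_mul, hcomp, hP1]
    calc (B.map (epsz τ)).prod * (B.map (epsz std)).prod * (B.map (epsz τ)).prod
        = (B.map (epsz std)).prod * ((B.map (epsz τ)).prod * (B.map (epsz τ)).prod) := by ring
      _ = (B.map (epsz std)).prod := by rw [hP3, mul_one]
  -- algebra
  set A : HB n u v := wB n u v ⟨w, hw⟩ with hA
  set C : HB n u v := cL n u v L with hC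
  have hconjL := conjL n u v w hw L
  have hmove : cL n u v (L.map (uf w)) = ((-1 : ℂ) ^ (m0 - 1)) • C := by
    rw [hLmap, cL_append]
    have h1 : cL n u v [uf τ ((a0 : ℕ) : Fin n)] = cB n u v (uf τ ((a0 : ℕ) : Fin n)) := by
      simp [cL]
    rw [h1, cL_move n u v _ _ hhd, List.length_map, hBtllen, hC, hLcons, cL_cons]
  have hAC : A * C = (-1 : ℂ) • (C * A) := by
    rw [hA, hC, hconjL, hmove, hE]
    rw [smul_mul_assoc, smul_smul]
    have hEq : (B.map (epsz std)).prod * (-1 : ℂ) ^ (m0 - 1) = -1 := by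
      rw [hB, List.map_map]
      rw [show ((List.range m0).map ((epsz std) ∘ fun j => ((a0 + j : ℕ) : Fin n))) =
        ((List.range m0).map fun j => epsz std ((a0 + j : ℕ) : Fin n)) from rfl]
      exact hsign
    rw [hEq]
  obtain ⟨s, hs, hsq⟩ := cL_sq n u v L hNodupL
  exact key_commutator n u v A C s hs hAC hsq

end AuxProof

open Fin.NatCast

/-- If the bipartition `(λ, μ)` of `n` has an even part in `λ` or an
odd part in `μ`, then every `w ∈ W_{B_n}` of cycle type `(λ, μ)` lies in the span of
commutators of `ℌ_{B_n}`. -/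
theorem signed_perm_vanishing_typeB (n : ℕ) (hn : 2 ≤ n) (u v : ℂ)
    (lam mu : Multiset ℕ) (hposl : ∀ a ∈ lam, 0 < a) (hposm : ∀ a ∈ mu, 0 < a)
    (hsum : lam.sum + mu.sum = n)
    (hbad : (∃ a ∈ lam, Even a) ∨ (∃ a ∈ mu, Odd a))
    (w : Equiv.Perm (P n)) (hw : w ∈ WB n) (hct : CycType n w lam mu) :
    wB n u v ⟨w, hw⟩ ∈ commSpan (HB n u v) := by
  haveI : NeZero n := ⟨by omega⟩
  obtain ⟨τ, hτ, hwdef⟩ := hct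
  set ll := sortDescM lam with hlldef
  set lm := sortDescM mu with hlmdef
  have hmemll : ∀ x : ℕ, x ∈ ll ↔ x ∈ lam := by
    intro x
    rw [hlldef, sortDescM, List.mem_reverse, Multiset.mem_sort]
  have hmemlm : ∀ x : ℕ, x ∈ lm ↔ x ∈ mu := by
    intro x
    rw [hlmdef, sortDescM, List.mem_reverse, Multiset.mem_sort]
  have hllpos : ∀ x ∈ ll, 0 < x := fun x hx => hposl x ((hmemll x).mp hx)
  have hlmpos : ∀ x ∈ lm, 0 < x := fun x hx => hposm x ((hmemlm x).mp hx)
  have hllsum : ll.sum = lam.sum := by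
    rw [hlldef, sortDescM, List.sum_reverse, ← Multiset.sum_coe, Multiset.sort_eq]
  have hlmsum : lm.sum = mu.sum := by
    rw [hlmdef, sortDescM, List.sum_reverse, ← Multiset.sum_coe, Multiset.sort_eq]
  have hsumn : ll.sum + lm.sum = n := by rw [hllsum, hlmsum, hsum]
  have hsumle : ll.sum + lm.sum ≤ n := le_of_eq hsumn
  have hstd : IsSigned n (stdRep n ll lm) := stdRep_isSigned n ll lm
  rcases hbad with ⟨a, ha, haeven⟩ | ⟨a, ha, haodd⟩
  · -- even part in λ : positive cycle of even length
    have hall : a ∈ ll := (hmemll a).mpr ha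
    obtain ⟨k0, hk0, hget⟩ := List.mem_iff_getElem.mp hall
    have hgetD : ll.getD k0 0 = a := by rw [List.getD_eq_getElem ll 0 hk0, hget]
    have hm0pos : 0 < ll.getD k0 0 := getD_pos ll hllpos k0 hk0
    have hblk0 : (ll.take k0).sum + ll.getD k0 0 ≤ ll.sum := take_getD_le ll k0 hk0
    have hblk : (ll.take k0).sum + ll.getD k0 0 ≤ n := by omega
    apply engine n u v w τ (stdRep n ll lm) hw hτ hstd hwdef
      ((ll.take k0).sum) (ll.getD k0 0) hm0pos hblk
    · intro j hj
      have hin : (ll.take k0).sum + j < n := by omega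
      have hres : (if j = ll.getD k0 0 - 1 then (ll.take k0).sum
          else (ll.take k0).sum + j + 1) < n := by split <;> omega
      have hcast1 : (((ll.take k0).sum + j : ℕ) : Fin n) = ⟨(ll.take k0).sum + j, hin⟩ :=
        Fin.ext (Fin.val_cast_of_lt hin)
      rw [uf, hcast1, stdRep_pos_act n ll lm hllpos hlmpos hsumle k0 hk0 j hj true hin hres]
      exact (Fin.ext (Fin.val_cast_of_lt hres)).symm
    · have heps : ∀ j ∈ List.range (ll.getD k0 0),
          epsz (stdRep n ll lm) (((ll.take k0).sum + j : ℕ) : Fin n) = 1 := by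
        intro j hj
        rw [List.mem_range] at hj
        have hin : (ll.take k0).sum + j < n := by omega
        have hres : (if j = ll.getD k0 0 - 1 then (ll.take k0).sum
            else (ll.take k0).sum + j + 1) < n := by split <;> omega
        have hcast1 : (((ll.take k0).sum + j : ℕ) : Fin n) = ⟨(ll.take k0).sum + j, hin⟩ :=
          Fin.ext (Fin.val_cast_of_lt hin)
        rw [epsz, hcast1, stdRep_pos_act n ll lm hllpos hlmpos hsumle k0 hk0 j hj true hin hres]
        simp [Zb]
      have hprod : ((List.range (ll.getD k0 0)).map fun j =>
          epsz (stdRep n ll lm) (((ll.take k0).sum + j : ℕ) : Fin n)).prod = 1 := by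
        apply List.prod_eq_one
        intro x hx
        simp only [List.mem_map] at hx
        obtain ⟨j, hj, rfl⟩ := hx
        exact heps j hj
      rw [hprod, one_mul]
      have hodd : Odd (ll.getD k0 0 - 1) := by
        rw [hgetD]
        rcases haeven with ⟨t, ht⟩
        have hapos : 0 < a := hposl a ha
        exact ⟨t - 1, by omega⟩
      exact Odd.neg_one_pow hodd
  · -- odd part in μ : negative cycle of odd length
    have hall : a ∈ lm := (hmemlm a).mpr ha
    obtain ⟨k0, hk0, hget⟩ := List.mem_iff_getElem.mp hall
    have hgetD : lm.getD k0 0 = a := by rw [List.getD_eq_getElem lm 0 hk0, hget]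
    have hm0pos : 0 < lm.getD k0 0 := getD_pos lm hlmpos k0 hk0
    have hblk0 : (lm.take k0).sum + lm.getD k0 0 ≤ lm.sum := take_getD_le lm k0 hk0
    have hblk : (ll.sum + (lm.take k0).sum) + lm.getD k0 0 ≤ n := by omega
    apply engine n u v w τ (stdRep n ll lm) hw hτ hstd hwdef
      (ll.sum + (lm.take k0).sum) (lm.getD k0 0) hm0pos hblk
    · intro j hj
      have hin : ll.sum + (lm.take k0).sum + j < n := by omega
      have hres : (if j = lm.getD k0 0 - 1 then ll.sum + (lm.take k0).sum
          else ll.sum + (lm.take k0).sum + j + 1) < n := by split <;> omega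
      have hcast1 : ((ll.sum + (lm.take k0).sum + j : ℕ) : Fin n) =
          ⟨ll.sum + (lm.take k0).sum + j, hin⟩ := Fin.ext (Fin.val_cast_of_lt hin)
      rw [uf, hcast1, stdRep_neg_act n ll lm hllpos hlmpos hsumle k0 hk0 j hj true hin hres]
      exact (Fin.ext (Fin.val_cast_of_lt hres)).symm
    · have heps : ∀ j ∈ List.range (lm.getD k0 0),
          epsz (stdRep n ll lm) ((ll.sum + (lm.take k0).sum + j : ℕ) : Fin n) =
            if j = lm.getD k0 0 - 1 then -1 else 1 := by
        intro j hj
        rw [List.mem_range] at hj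
        have hin : ll.sum + (lm.take k0).sum + j < n := by omega
        have hres : (if j = lm.getD k0 0 - 1 then ll.sum + (lm.take k0).sum
            else ll.sum + (lm.take k0).sum + j + 1) < n := by split <;> omega
        have hcast1 : ((ll.sum + (lm.take k0).sum + j : ℕ) : Fin n) =
            ⟨ll.sum + (lm.take k0).sum + j, hin⟩ := Fin.ext (Fin.val_cast_of_lt hin)
        rw [epsz, hcast1, stdRep_neg_act n ll lm hllpos hlmpos hsumle k0 hk0 j hj true hin hres]
        show Zb (if j = lm.getD k0 0 - 1 then !true else true) =
          if j = lm.getD k0 0 - 1 then -1 else 1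
        by_cases hje : j = lm.getD k0 0 - 1
        · rw [if_pos hje, if_pos hje]
          simp [Zb]
        · rw [if_neg hje, if_neg hje]
          simp [Zb]
      have hprod : ((List.range (lm.getD k0 0)).map fun j =>
          epsz (stdRep n ll lm) ((ll.sum + (lm.take k0).sum + j : ℕ) : Fin n)).prod = -1 := by
        rw [List.map_congr_left heps]
        obtain ⟨m1, hm1⟩ : ∃ m1, lm.getD k0 0 = m1 + 1 := ⟨lm.getD k0 0 - 1, by omega⟩
        rw [hm1, List.range_succ, List.map_append, List.prod_append, List.map_singleton,
          List.prod_singleton, Nat.add_sub_cancel, if_pos rfl]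
        have h1 : ((List.range m1).map fun j => if j = m1 then (-1 : ℂ) else 1).prod = 1 := by
          apply List.prod_eq_one
          intro x hx
          simp only [List.mem_map, List.mem_range] at hx
          obtain ⟨j, hj, rfl⟩ := hx
          rw [if_neg (by omega)]
        rw [h1, one_mul]
      rw [hprod]
      have heven : Even (lm.getD k0 0 - 1) := by
        rw [hgetD]
        rcases haodd with ⟨t, ht⟩
        exact ⟨t, by omega⟩
      rw [Even.neg_one_pow heven, mul_one]

end DAHCBD
end
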